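/- Let q > r ≥ 1 be positive integers with gcd(q,r)=1 and let n be sufficiently large. Then the number of maximal subsets of {1,...,n} that contain no solution (x,y,z) to qx+qy=rz is at least 2^(⌈⌊rn/(2q) − rq/2⌋·(q−1)/q⌉ − 1). -/
import Mathlib

open Finset

/-- For `q > r ≥ 1` with `gcd(q,r) = 1` and `n` sufficiently large, the number of
maximal subsets of `[n]` containing no solution to `qx + qy = rz` is at least
`2^(⌈⌊rn/(2q) - rq/2⌋·(q-1)/q⌉ - 1)`. -/
theorem stmt13 (q r : ℕ) (hr : 1 ≤ r) (hrq : r < q) (hgcd : Nat.gcd q r = 1) :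
    ∃ N : ℕ, ∀ n : ℕ, N ≤ n →
      2 ^ ((Int.toNat ⌊(r * n : ℚ) / (2 * q) - (r * q : ℚ) / 2⌋ * (q - 1) + q - 1) / q - 1) ≤
        Nat.card {A : Finset ℕ // A ⊆ Finset.Icc 1 n ∧
          (∀ x ∈ A, ∀ y ∈ A, ∀ z ∈ A, q * x + q * y ≠ r * z) ∧
          ∀ B : Finset ℕ, B ⊆ Finset.Icc 1 n →
            (∀ x ∈ B, ∀ y ∈ B, ∀ z ∈ B, q * x + q * y ≠ r * z) → A ⊆ B → A = B} := by
  classical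
  have hq2 : 2 ≤ q := by omega
  refine ⟨q * q, fun n hn => ?_⟩
  set Lfree : Finset ℕ → Prop :=
    fun A => ∀ x ∈ A, ∀ y ∈ A, ∀ z ∈ A, q * x + q * y ≠ r * z with hLfree
  set m := n / (q * q) with hmdef
  set k := q * m with hkdef
  set z0 := q * k with hz0def
  set R := r * k with hRdef
  set U := (R - 1) / 2 with hUdef
  set P := (Icc 1 U).filter (fun a => ¬ q ∣ a) with hPdef
  have hm1 : 1 ≤ m := (Nat.one_le_div_iff (by positivity)).mpr hn
  have hkpos : 0 < k := Nat.mul_pos (by omega) hm1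
  have hz0n : z0 ≤ n := by
    calc z0 = (n / (q * q)) * (q * q) := by rw [hz0def, hkdef, hmdef]; ring
    _ ≤ n := Nat.div_mul_le_self n (q * q)
  have hRz0 : R < z0 := by
    rw [hRdef, hz0def]; exact mul_lt_mul_of_pos_right hrq hkpos
  have hR2 : 2 ≤ R := by
    have hqk : q ≤ k := by rw [hkdef]; exact Nat.le_mul_of_pos_right q hm1
    calc 2 ≤ q := hq2
    _ ≤ k := hqk
    _ = 1 * k := (one_mul k).symm
    _ ≤ r * k := Nat.mul_le_mul_right k hr
  have hqR : q ∣ R := ⟨r * m, by rw [hRdef, hkdef]; ring⟩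
  have heq : q * R = r * z0 := by rw [hRdef, hz0def]; ring
  have hRn : R < n := lt_of_lt_of_le hRz0 hz0n
  have hPmem : ∀ a ∈ P, 1 ≤ a ∧ a ≤ U ∧ ¬ q ∣ a := by
    intro a ha; rw [hPdef, mem_filter, mem_Icc] at ha; exact ⟨ha.1.1, ha.1.2, ha.2⟩
  -- every Lfree subset extends to a maximal one
  have ext_max : ∀ C : Finset ℕ, C ⊆ Icc 1 n → Lfree C →
      ∃ M, C ⊆ M ∧ M ⊆ Icc 1 n ∧ Lfree M ∧
        ∀ B : Finset ℕ, B ⊆ Icc 1 n → Lfree B → M ⊆ B → M = B := by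
    intro C hCsub hCfree
    obtain ⟨M, hM, hmax⟩ := Finset.exists_max_image
      (((Icc 1 n).powerset).filter (fun B => Lfree B ∧ C ⊆ B)) Finset.card
      ⟨C, by rw [mem_filter, mem_powerset]; exact ⟨hCsub, hCfree, Finset.Subset.refl C⟩⟩
    rw [mem_filter, mem_powerset] at hM
    refine ⟨M, hM.2.2, hM.1, hM.2.1, ?_⟩
    intro B hBsub hBfree hMB
    have hBmem : B ∈ ((Icc 1 n).powerset).filter (fun B => Lfree B ∧ C ⊆ B) := by
      rw [mem_filter, mem_powerset]
      exact ⟨hBsub, hBfree, hM.2.2.trans hMB⟩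
    exact Finset.eq_of_subset_of_card_le hMB (hmax B hBmem)
  -- main construction
  have main : ∀ S : Finset ℕ, S ⊆ P →
      ∃ M : Finset ℕ, (M ⊆ Icc 1 n ∧ Lfree M ∧
        ∀ B : Finset ℕ, B ⊆ Icc 1 n → Lfree B → M ⊆ B → M = B) ∧
        (∀ a ∈ P, (a ∈ M ↔ a ∈ S)) := by
    intro S hS
    set CS := insert z0 (S ∪ (P \ S).image (fun a => R - a)) with hCSdef
    have hCSmem : ∀ w ∈ CS, w = z0 ∨ w ∈ S ∨ ∃ a, a ∈ P ∧ a ∉ S ∧ w = R - a := by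
      intro w hw
      rw [hCSdef, mem_insert, mem_union] at hw
      rcases hw with h | h | h
      · exact Or.inl h
      · exact Or.inr (Or.inl h)
      · rw [mem_image] at h
        obtain ⟨a, ha, hwa⟩ := h
        rw [mem_sdiff] at ha
        exact Or.inr (Or.inr ⟨a, ha.1, ha.2, hwa.symm⟩)
    have hz0CS : z0 ∈ CS := mem_insert_self _ _
    have hSCS : ∀ a ∈ S, a ∈ CS := fun a ha =>
      mem_insert_of_mem (mem_union_left _ ha)
    have himCS : ∀ a ∈ P, a ∉ S → R - a ∈ CS := fun a ha has =>
      mem_insert_of_mem (mem_union_right _ (mem_image_of_mem _ (mem_sdiff.2 ⟨ha, has⟩)))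
    -- bounds for CS elements
    have hCSsub : CS ⊆ Icc 1 n := by
      intro w hw
      rw [mem_Icc]
      rcases hCSmem w hw with h | h | ⟨a, ha, _, hwa⟩
      · omega
      · have := hPmem w (hS h); omega
      · have := hPmem a ha; omega
    -- CS is Lfree
    have hCSfree : Lfree CS := by
      intro x hx y hy z hz habs
      -- q ∣ z
      have hqz : q ∣ z := by
        have h1 : q ∣ r * z := ⟨x + y, by rw [← habs]; ring⟩
        exact (Nat.Coprime.dvd_of_dvd_mul_left (hgcd : Nat.Coprime q r) h1)
      have hz0' : z = z0 := by
        rcases hCSmem z hz with h | h | ⟨a, ha, _, hwa⟩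
        · exact h
        · exact absurd hqz (hPmem z (hS h)).2.2
        · exfalso
          obtain ⟨h1, h2, h3⟩ := hPmem a ha
          have haR : a ≤ R := by omega
          have : a = R - z := by omega
          exact h3 (this ▸ Nat.dvd_sub hqR hqz)
      have hxy : x + y = R := by
        have h1 : q * (x + y) = q * R := by
          rw [Nat.mul_add, habs, hz0', heq]
        exact Nat.eq_of_mul_eq_mul_left (by omega) h1
      -- case analysis on x and y
      rcases hCSmem x hx with h1 | h1 | ⟨a, ha, haS, h1⟩ <;>
        rcases hCSmem y hy with h2 | h2 | ⟨b, hb, hbS, h2⟩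
      · omega
      · have := hPmem y (hS h2); omega
      · have := hPmem b hb; omega
      · have := hPmem x (hS h1); omega
      · have hxb := hPmem x (hS h1); have hyb := hPmem y (hS h2); omega
      · -- x ∈ S, y = R - b : then x = b, contradiction with b ∉ S
        have hxb := hPmem x (hS h1); have hbb := hPmem b hb
        have : x = b := by omega
        exact hbS (this ▸ h1)
      · have := hPmem a ha; omega
      · have haa := hPmem a ha; have hyb := hPmem y (hS h2)
        have : y = a := by omega
        exact haS (this ▸ h2)
      · have haa := hPmem a ha; have hbb := hPmem b hb; omega
    obtain ⟨M, hCM, hMsub, hMfree, hMmax⟩ := ext_max CS hCSsub hCSfree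
    refine ⟨M, ⟨hMsub, hMfree, hMmax⟩, ?_⟩
    intro a ha
    constructor
    · intro haM
      by_contra haS
      have h1 : R - a ∈ M := hCM (himCS a ha haS)
      have h2 : z0 ∈ M := hCM hz0CS
      obtain ⟨hb1, hb2, _⟩ := hPmem a ha
      refine hMfree a haM (R - a) h1 z0 h2 ?_
      have haR : a + (R - a) = R := by omega
      calc q * a + q * (R - a) = q * (a + (R - a)) := (Nat.mul_add q a (R - a)).symm
      _ = q * R := by rw [haR]
      _ = r * z0 := heq
    · intro haS
      exact hCM (hSCS a haS)
  -- choose the maximal sets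
  choose F hF1 hF2 using main
  -- cardinality of P
  have hPcard : P.card = U - U / q := by
    have h1 : ((Icc 1 U).filter (fun a => q ∣ a)).card = U / q := by
      have : Icc 1 U = Ioc 0 U := by
        ext x; simp [mem_Icc, mem_Ioc]; omega
      rw [this]
      exact Nat.Ioc_filter_dvd_card_eq_div U q
    have h2 := Finset.card_filter_add_card_filter_not
      (s := Icc 1 U) (fun a => q ∣ a)
    rw [Nat.card_Icc] at h2
    rw [hPdef]
    omega
  -- floor bound : T ≤ U
  have hTU : Int.toNat ⌊(r * n : ℚ) / (2 * q) - (r * q : ℚ) / 2⌋ ≤ U := by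
    rw [Int.toNat_le]
    refine Int.le_of_lt_add_one (Int.floor_lt.mpr ?_)
    push_cast
    have hn2 : (n : ℚ) < q * q * m + q * q := by
      have hmod : n % (q * q) < q * q := Nat.mod_lt _ (by positivity)
      have hdm := Nat.div_add_mod n (q * q)
      have : n < q * q * m + q * q := by rw [hmdef]; omega
      exact_mod_cast this
    have hU2 : (R : ℚ) ≤ 2 * U + 2 := by
      have : R ≤ 2 * U + 2 := by omega
      exact_mod_cast this
    have hRq : (R : ℚ) = r * (q * m) := by rw [hRdef, hkdef]; push_cast; ring
    have hr0 : (0 : ℚ) < r := by exact_mod_cast hr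
    have hq0 : (0 : ℚ) < q := by positivity
    rw [sub_lt_iff_lt_add, div_lt_iff₀ (by positivity)]
    have A' : (r : ℚ) * n < r * (q * q * m + q * q) :=
      mul_lt_mul_of_pos_left hn2 hr0
    have B' : (q : ℚ) * (r * (q * m)) ≤ q * (2 * U + 2) := by
      rw [← hRq]; exact mul_le_mul_of_nonneg_left hU2 (le_of_lt hq0)
    nlinarith [A', B']
  -- exponent bound
  have hexp : (Int.toNat ⌊(r * n : ℚ) / (2 * q) - (r * q : ℚ) / 2⌋ * (q - 1) + q - 1) / q - 1
      ≤ P.card := by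
    set T := Int.toNat ⌊(r * n : ℚ) / (2 * q) - (r * q : ℚ) / 2⌋ with hT
    have h1 : T * (q - 1) + q - 1 ≤ U * (q - 1) + q - 1 := by
      have := Nat.mul_le_mul_right (q - 1) hTU; omega
    have h2 : (U * (q - 1) + q - 1) / q ≤ U - U / q := by
      rw [Nat.div_le_iff_le_mul_add_pred (by omega : 0 < q)]
      have hd : q * (U / q) ≤ U := by
        rw [mul_comm]; exact Nat.div_mul_le_self U q
      have key2 : U * (q - 1) ≤ q * (U - U / q) := by
        rw [Nat.mul_sub, Nat.mul_sub, Nat.mul_one, mul_comm U q]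
        exact Nat.sub_le_sub_left hd (q * U)
      rw [Nat.add_sub_assoc (by omega : 1 ≤ q)]
      exact Nat.add_le_add_right key2 _
    calc (T * (q - 1) + q - 1) / q - 1 ≤ (T * (q - 1) + q - 1) / q := Nat.sub_le _ _
    _ ≤ (U * (q - 1) + q - 1) / q := Nat.div_le_div_right h1
    _ ≤ U - U / q := h2
    _ = P.card := hPcard.symm
  -- finiteness of the target type
  haveI hfin : Finite {A : Finset ℕ // A ⊆ Finset.Icc 1 n ∧ Lfree A ∧
      ∀ B : Finset ℕ, B ⊆ Finset.Icc 1 n → Lfree B → A ⊆ B → A = B} := by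
    refine Finite.of_injective
      (fun A : {A : Finset ℕ // A ⊆ Finset.Icc 1 n ∧ Lfree A ∧
        ∀ B : Finset ℕ, B ⊆ Finset.Icc 1 n → Lfree B → A ⊆ B → A = B} =>
        (⟨A.1, mem_powerset.2 A.2.1⟩ : {B // B ∈ (Icc 1 n).powerset})) ?_
    intro A B h
    have h2 := congrArg Subtype.val h
    exact Subtype.ext h2
  -- the injection
  have hinj : Function.Injective
      (fun S : {S // S ∈ P.powerset} =>
        (⟨F S.1 (mem_powerset.1 S.2), (hF1 S.1 (mem_powerset.1 S.2)).1,
          (hF1 S.1 (mem_powerset.1 S.2)).2.1, (hF1 S.1 (mem_powerset.1 S.2)).2.2⟩ :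
          {A : Finset ℕ // A ⊆ Finset.Icc 1 n ∧ Lfree A ∧
            ∀ B : Finset ℕ, B ⊆ Finset.Icc 1 n → Lfree B → A ⊆ B → A = B})) := by
    intro S1 S2 h
    have hFeq : F S1.1 (mem_powerset.1 S1.2) = F S2.1 (mem_powerset.1 S2.2) :=
      congrArg Subtype.val h
    apply Subtype.ext
    ext a
    constructor
    · intro ha
      have haP : a ∈ P := mem_powerset.1 S1.2 ha
      have h1 : a ∈ F S1.1 (mem_powerset.1 S1.2) :=
        (hF2 S1.1 (mem_powerset.1 S1.2) a haP).mpr ha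
      rw [hFeq] at h1
      exact (hF2 S2.1 (mem_powerset.1 S2.2) a haP).mp h1
    · intro ha
      have haP : a ∈ P := mem_powerset.1 S2.2 ha
      have h1 : a ∈ F S2.1 (mem_powerset.1 S2.2) :=
        (hF2 S2.1 (mem_powerset.1 S2.2) a haP).mpr ha
      rw [← hFeq] at h1
      exact (hF2 S1.1 (mem_powerset.1 S1.2) a haP).mp h1
  calc 2 ^ ((Int.toNat ⌊(r * n : ℚ) / (2 * q) - (r * q : ℚ) / 2⌋ * (q - 1) + q - 1) / q - 1)
      ≤ 2 ^ P.card := Nat.pow_le_pow_right (by norm_num) hexp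
  _ = Nat.card {S // S ∈ P.powerset} := by
      rw [Nat.card_eq_fintype_card, Fintype.card_coe, Finset.card_powerset]
  _ ≤ Nat.card {A : Finset ℕ // A ⊆ Finset.Icc 1 n ∧ Lfree A ∧
      ∀ B : Finset ℕ, B ⊆ Finset.Icc 1 n → Lfree B → A ⊆ B → A = B} :=
      Nat.card_le_card_of_injective _ hinj
  _ = Nat.card {A : Finset ℕ // A ⊆ Finset.Icc 1 n ∧
      (∀ x ∈ A, ∀ y ∈ A, ∀ z ∈ A, q * x + q * y ≠ r * z) ∧
      ∀ B : Finset ℕ, B ⊆ Finset.Icc 1 n →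
        (∀ x ∈ B, ∀ y ∈ B, ∀ z ∈ B, q * x + q * y ≠ r * z) → A ⊆ B → A = B} := rfl
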